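/- Let (u^r_k)_{k=0}^{K} in a finite-dimensional subspace Xʳ ⊆ H¹₀ satisfy the BDF2 ADL-ROM scheme: for k = 1,...,K-1, (3u^r_{k+1} - 4u^r_k + u^r_{k-1}, vʳ)/(2Δt) + ν(∇u^r_{k+1}, ∇vʳ) + b*(D_N^r(F^r u^r_{k+1}), u^r_{k+1}, vʳ) = (f_{k+1}, vʳ) for all vʳ ∈ Xʳ, where b* is the skew-symmetric trilinear form satisfying b*(w, v, v) = 0. Then the unconditional stability bound ‖u^r_K‖² + 2νΔt Σ_{k=1}^{K-1} ‖∇u^r_{k+1}‖² ≤ ‖u^r_1‖² + ‖2u^r_1 - u^r_0‖² + 2ν⁻¹Δt Σ_{k=1}^{K-1} ‖f_{k+1}‖²_{-1} holds, where ‖·‖_{-1} is the dual norm with respect to ‖∇·‖. -/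

import Mathlib

open RealInnerProductSpace Finset

lemma gstab_identity {H : Type*} [NormedAddCommGroup H] [InnerProductSpace ℝ H]
    (x y z : H) :
    ⟪(3:ℝ) • x - (4:ℝ) • y + z, x⟫ =
      (1/2) * (‖x‖^2 + ‖(2:ℝ) • x - y‖^2) - (1/2) * (‖y‖^2 + ‖(2:ℝ) • y - z‖^2)
        + (1/2) * ‖x - (2:ℝ) • y + z‖^2 := by
  simp only [← real_inner_self_eq_norm_sq, inner_add_left, inner_add_right,
    inner_sub_left, inner_sub_right, real_inner_smul_left, real_inner_smul_right,
    real_inner_comm y x, real_inner_comm z x, real_inner_comm z y]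
  ring

/-- Unconditional stability of the BDF2 ADL-ROM scheme. Here `a(·,·)` plays the
role of the gradient pairing `(∇·,∇·)`, `b` is the skew-symmetric trilinear
form (with `b(w,v,v) = 0`), `D` is the composition of the van Cittert operator
with the ROM filter, and `fdual k` is the dual norm `‖f_k‖_{-1}` with respect
to `‖∇·‖ = √(a(·,·))`. -/
theorem bdf2_adl_rom_stability {H : Type*} [NormedAddCommGroup H]
    [InnerProductSpace ℝ H]
    (X : Submodule ℝ H) [FiniteDimensional ℝ X]
    (a : LinearMap.BilinForm ℝ H) (b : H → H → H → ℝ)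
    (D : H → H) (u f : ℕ → H) (fdual : ℕ → ℝ) (ν Δt : ℝ) (K : ℕ)
    (hν : 0 < ν) (hΔt : 0 < Δt) (hK : 1 ≤ K)
    (hu : ∀ k, u k ∈ X)
    (ha_pos : ∀ v, 0 ≤ a v v)
    (hb : ∀ w v, b w v v = 0)
    (hfdual_nonneg : ∀ k, 0 ≤ fdual k)
    (hfdual : ∀ k, ∀ v ∈ X, ⟪f k, v⟫ ≤ fdual k * Real.sqrt (a v v))
    (hscheme : ∀ k, 1 ≤ k → k ≤ K - 1 → ∀ v ∈ X,
      (2*Δt)⁻¹ * ⟪(3:ℝ) • u (k+1) - (4:ℝ) • u k + u (k-1), v⟫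
        + ν * a (u (k+1)) v + b (D (u (k+1))) (u (k+1)) v = ⟪f (k+1), v⟫) :
    ‖u K‖^2 + 2 * ν * Δt * ∑ k ∈ Icc 1 (K-1), a (u (k+1)) (u (k+1)) ≤
      ‖u 1‖^2 + ‖(2:ℝ) • u 1 - u 0‖^2
        + 2 * ν⁻¹ * Δt * ∑ k ∈ Icc 1 (K-1), (fdual (k+1))^2 := by
  set G : ℕ → ℝ := fun k => ‖u k‖^2 + ‖(2:ℝ) • u k - u (k-1)‖^2 with hG
  -- per-step estimate
  have step : ∀ k, 1 ≤ k → k ≤ K - 1 →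
      G (k+1) + 2*ν*Δt * a (u (k+1)) (u (k+1)) ≤
        G k + 2*ν⁻¹*Δt * (fdual (k+1))^2 := by
    intro k hk1 hk2
    have heq := hscheme k hk1 hk2 (u (k+1)) (hu _)
    rw [hb] at heq
    set A := a (u (k+1)) (u (k+1)) with hA
    have hA0 : 0 ≤ A := ha_pos _
    have hF : ⟪f (k+1), u (k+1)⟫ ≤ fdual (k+1) * Real.sqrt A :=
      hfdual (k+1) (u (k+1)) (hu _)
    have hFY : fdual (k+1) * Real.sqrt A ≤ ν/2 * A + (fdual (k+1))^2 / (2*ν) := by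
      have hs : Real.sqrt A ^ 2 = A := Real.sq_sqrt hA0
      have h2ν : (0:ℝ) < 2*ν := by linarith
      have h : 2*ν*(fdual (k+1) * Real.sqrt A) ≤ ν^2*A + (fdual (k+1))^2 := by
        nlinarith [sq_nonneg (ν * Real.sqrt A - fdual (k+1))]
      rw [show ν/2 * A + (fdual (k+1))^2/(2*ν) = (ν^2*A + (fdual (k+1))^2)/(2*ν) by
        field_simp, le_div_iff₀ h2ν]
      linarith
    have hid := gstab_identity (u (k+1)) (u k) (u (k-1))
    have hkk : k + 1 - 1 = k := rfl
    have hIP : ⟪(3:ℝ) • u (k+1) - (4:ℝ) • u k + u (k-1), u (k+1)⟫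
        = 2*Δt * (⟪f (k+1), u (k+1)⟫ - ν * A) := by
      have h2Δt : (2*Δt) ≠ 0 := by positivity
      field_simp at heq ⊢
      linarith [heq]
    have hGdef : ⟪(3:ℝ) • u (k+1) - (4:ℝ) • u k + u (k-1), u (k+1)⟫
        = (1/2) * G (k+1) - (1/2) * G k
          + (1/2) * ‖u (k+1) - (2:ℝ) • u k + u (k-1)‖^2 := by
      rw [hid]; simp only [hG, hkk]
    have he0 : 0 ≤ ‖u (k+1) - (2:ℝ) • u k + u (k-1)‖^2 := sq_nonneg _
    have hFle : ⟪f (k+1), u (k+1)⟫ ≤ ν/2 * A + (fdual (k+1))^2 / (2*ν) := hF.trans hFY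
    have hmul : 4*Δt*⟪f (k+1), u (k+1)⟫ ≤ 4*Δt*(ν/2 * A + (fdual (k+1))^2 / (2*ν)) :=
      mul_le_mul_of_nonneg_left hFle (by positivity)
    have hid2 : 4*Δt*(ν/2 * A + (fdual (k+1))^2 / (2*ν))
        = 2*Δt*ν*A + 2*ν⁻¹*Δt*(fdual (k+1))^2 := by
      field_simp; ring
    rw [hid2] at hmul
    linarith [hGdef, hIP]
  -- induction
  have main : ∀ m, 1 ≤ m → m ≤ K →
      G m + 2*ν*Δt * ∑ k ∈ Icc 1 (m-1), a (u (k+1)) (u (k+1)) ≤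
        G 1 + 2*ν⁻¹*Δt * ∑ k ∈ Icc 1 (m-1), (fdual (k+1))^2 := by
    intro m hm1 hmK
    induction m, hm1 using Nat.le_induction with
    | base => simp
    | succ m hm ih =>
      have hmK' : m ≤ K := by omega
      have hmK1 : m ≤ K - 1 := by omega
      obtain ⟨n, rfl⟩ : ∃ n, m = n + 1 := ⟨m - 1, by omega⟩
      have hsum1 : ∑ k ∈ Icc 1 (n+1+1-1), a (u (k+1)) (u (k+1))
          = (∑ k ∈ Icc 1 (n+1-1), a (u (k+1)) (u (k+1)))
            + a (u (n+1+1)) (u (n+1+1)) := by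
        have : (n+1+1-1) = n + 1 := rfl
        rw [this, Finset.sum_Icc_succ_top (by omega : 1 ≤ n+1)]
        norm_num
      have hsum2 : ∑ k ∈ Icc 1 (n+1+1-1), (fdual (k+1))^2
          = (∑ k ∈ Icc 1 (n+1-1), (fdual (k+1))^2) + (fdual (n+1+1))^2 := by
        have : (n+1+1-1) = n + 1 := rfl
        rw [this, Finset.sum_Icc_succ_top (by omega : 1 ≤ n+1)]
        norm_num
      have hstep := step (n+1) (by omega) hmK1
      have ih' := ih hmK'
      rw [hsum1, hsum2]
      linarith
  have hmain := main K hK le_rfl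
  have hK0 : 0 ≤ ‖(2:ℝ) • u K - u (K-1)‖^2 := sq_nonneg _
  have hG1 : G 1 = ‖u 1‖^2 + ‖(2:ℝ) • u 1 - u 0‖^2 := by simp [hG]
  have hGK : G K = ‖u K‖^2 + ‖(2:ℝ) • u K - u (K-1)‖^2 := rfl
  rw [hG1, hGK] at hmain
  linarith
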